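/- Let u : U → ℝ be an η-strongly convex function on an open convex set U ⊆ ℝⁿ, and let K ⊂ U be compact. Define ũ : ℝⁿ → ℝ by ũ(x) = sup{ u(z) + ⟨ξ_z, x − z⟩ + (η/2)|x − z|² : z ∈ K, ξ_z ∈ ∂u(z) }. Then ũ is finite everywhere, η-strongly convex on ℝⁿ, and satisfies: (a) ũ(x) = u(x) for all x ∈ K; (b) ũ(x) ≤ u(x) for all x ∈ U. -/

import Mathlib

open MeasureTheory Metric Set Filter
open scoped ENNReal RealInnerProductSpace

/-- The subdifferential of `u : U → ℝ` at `x`. -/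
def subdiff {n : ℕ} (U : Set (EuclideanSpace ℝ (Fin n))) (u : EuclideanSpace ℝ (Fin n) → ℝ)
    (x : EuclideanSpace ℝ (Fin n)) : Set (EuclideanSpace ℝ (Fin n)) :=
  {ξ | ∀ y ∈ U, u x + ⟪ξ, y - x⟫ ≤ u y}

/-- Existence of subgradients of a convex function at a point of an open convex set. -/
private lemma exists_subgrad_w {n : ℕ} {U : Set (EuclideanSpace ℝ (Fin n))}
    (hUopen : IsOpen U) (hUconv : Convex ℝ U) {w : EuclideanSpace ℝ (Fin n) → ℝ}
    (hw : ConvexOn ℝ U w) {z : EuclideanSpace ℝ (Fin n)} (hz : z ∈ U) :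
    ∃ ζ, ∀ y ∈ U, w z + ⟪ζ, y - z⟫ ≤ w y := by
  classical
  have hcont : ContinuousOn w U := hw.continuousOn hUopen
  set T : Set (EuclideanSpace ℝ (Fin n) × ℝ) := {p | p.1 ∈ U ∧ w p.1 < p.2} with hT
  have hTopen : IsOpen T := by
    have h1 : IsOpen (Prod.fst ⁻¹' U : Set (EuclideanSpace ℝ (Fin n) × ℝ)) := hUopen.preimage continuous_fst
    have h2 : ContinuousOn (fun p : EuclideanSpace ℝ (Fin n) × ℝ => p.2 - w p.1) (Prod.fst ⁻¹' U) :=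
      continuous_snd.continuousOn.sub (hcont.comp continuous_fst.continuousOn fun p hp => hp)
    have := h2.isOpen_inter_preimage h1 (isOpen_Ioi (a := (0:ℝ)))
    convert this using 1
    ext p
    simp [hT, sub_pos]
  have hTconv : Convex ℝ T := by
    rintro p ⟨hp1, hp2⟩ q ⟨hq1, hq2⟩ a b ha hb hab
    refine ⟨hUconv hp1 hq1 ha hb hab, ?_⟩
    have h1 := hw.2 hp1 hq1 ha hb hab
    have h2 : (a • p + b • q).1 = a • p.1 + b • q.1 := rfl
    have h3 : (a • p + b • q).2 = a * p.2 + b * q.2 := rfl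
    rw [h2, h3]
    rcases eq_or_lt_of_le ha with h | h
    · have hb1 : b = 1 := by linarith
      simp only [← h, hb1, zero_smul, zero_add, one_smul, zero_mul, one_mul] at h1 ⊢
      exact lt_of_le_of_lt h1 (by linarith)
    · have : a * w p.1 + b * w q.1 < a * p.2 + b * q.2 := by
        have := mul_lt_mul_of_pos_left hp2 h
        have := mul_le_mul_of_nonneg_left hq2.le hb
        linarith
      exact lt_of_le_of_lt h1 this
  have hzT : ((z, w z) : EuclideanSpace ℝ (Fin n) × ℝ) ∉ T := by simp [hT]
  obtain ⟨f, hf⟩ := geometric_hahn_banach_point_open hTconv hTopen hzT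
  set g : EuclideanSpace ℝ (Fin n) →L[ℝ] ℝ := f.comp (ContinuousLinearMap.inl ℝ (EuclideanSpace ℝ (Fin n)) ℝ) with hg
  set c : ℝ := f (0, 1) with hc
  have hdec : ∀ (y : EuclideanSpace ℝ (Fin n)) (t : ℝ), f (y, t) = g y + t * c := by
    intro y t
    have h1 : ((y, t) : EuclideanSpace ℝ (Fin n) × ℝ) = (y, (0 : ℝ)) + t • ((0 : EuclideanSpace ℝ (Fin n)), (1 : ℝ)) := by
      simp [Prod.ext_iff]
    rw [h1, map_add, f.map_smul, smul_eq_mul]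
    rfl
  have hcpos : (0 : ℝ) < c := by
    have h1 := hf (z, w z + 1) ⟨hz, by show w z < w z + 1; linarith⟩
    rw [hdec, hdec] at h1
    nlinarith
  have hle : ∀ y ∈ U, g z + w z * c ≤ g y + w y * c := by
    intro y hy
    have h2 : ∀ ε > (0 : ℝ), g z + w z * c ≤ g y + w y * c + ε := by
      intro ε hε
      have h1 := hf (y, w y + ε / c) ⟨hy, by show w y < w y + ε / c; have : 0 < ε / c := div_pos hε hcpos; linarith⟩
      rw [hdec, hdec] at h1
      have : (w y + ε / c) * c = w y * c + ε := by field_simp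
      nlinarith
    exact le_of_forall_pos_le_add h2
  refine ⟨(InnerProductSpace.toDual ℝ (EuclideanSpace ℝ (Fin n))).symm (-(c⁻¹) • g), fun y hy => ?_⟩
  have hip : ⟪(InnerProductSpace.toDual ℝ (EuclideanSpace ℝ (Fin n))).symm (-(c⁻¹) • g), y - z⟫
      = -(c⁻¹) * (g y - g z) := by
    rw [InnerProductSpace.toDual_symm_apply]
    simp [map_sub]
    ring
  rw [hip]
  have h3 := hle y hy
  rw [← mul_le_mul_iff_right₀ hcpos]
  have hcne : c ≠ 0 := ne_of_gt hcpos
  field_simp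
  nlinarith

/-- Strong subgradient inequality for an `η`-strongly convex function. -/
private lemma strong_subgrad {n : ℕ} {U : Set (EuclideanSpace ℝ (Fin n))}
    (hUconv : Convex ℝ U) {η : ℝ} (hη : 0 < η) {u : EuclideanSpace ℝ (Fin n) → ℝ}
    (hu : ConvexOn ℝ U (fun x => u x - η / 2 * ‖x‖ ^ 2))
    {z : EuclideanSpace ℝ (Fin n)} (hz : z ∈ U) {ξ : EuclideanSpace ℝ (Fin n)}
    (hξ : ξ ∈ subdiff U u z) {y : EuclideanSpace ℝ (Fin n)} (hy : y ∈ U) :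
    u z + ⟪ξ, y - z⟫ + η / 2 * ‖y - z‖ ^ 2 ≤ u y := by
  have step : ∀ t : ℝ, 0 < t → t ≤ 1 →
      ⟪ξ, y - z⟫ + η / 2 * (1 - t) * ‖y - z‖ ^ 2 ≤ u y - u z := by
    intro t ht ht1
    have ha : (0 : ℝ) ≤ 1 - t := by linarith
    have h1 := hu.2 hz hy ha ht.le (by ring)
    have hpU : (1 - t) • z + t • y ∈ U := hUconv hz hy ha ht.le (by ring)
    have h2 := hξ ((1 - t) • z + t • y) hpU
    have h3 : (1 - t) • z + t • y - z = t • (y - z) := by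
      rw [smul_sub, sub_smul, one_smul]; abel
    rw [h3, real_inner_smul_right] at h2
    have h4 : ‖(1 - t) • z + t • y‖ ^ 2
        = (1 - t) ^ 2 * ‖z‖ ^ 2 + 2 * ((1 - t) * t * ⟪z, y⟫) + t ^ 2 * ‖y‖ ^ 2 := by
      rw [norm_add_sq_real, real_inner_smul_left, real_inner_smul_right, norm_smul, norm_smul]
      rw [Real.norm_eq_abs, Real.norm_eq_abs, abs_of_nonneg ha, abs_of_nonneg ht.le]
      ring
    have h5 : ‖y - z‖ ^ 2 = ‖y‖ ^ 2 - 2 * ⟪y, z⟫ + ‖z‖ ^ 2 := norm_sub_sq_real y z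
    have h6 : ⟪z, y⟫ = ⟪y, z⟫ := real_inner_comm y z
    simp only [smul_eq_mul] at h1
    rw [h4, h6] at h1
    have h7 : t * ⟪ξ, y - z⟫ ≤ t * ((u y - u z) - η / 2 * (1 - t) * ‖y - z‖ ^ 2) := by
      rw [h5]
      nlinarith [h1, h2]
    have h8 : ⟪ξ, y - z⟫ ≤ (u y - u z) - η / 2 * (1 - t) * ‖y - z‖ ^ 2 :=
      le_of_mul_le_mul_left h7 ht
    linarith
  have hc : (0 : ℝ) ≤ η / 2 * ‖y - z‖ ^ 2 := by positivity
  set c := η / 2 * ‖y - z‖ ^ 2 with hcdef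
  have : ⟪ξ, y - z⟫ + c ≤ u y - u z := by
    refine le_of_forall_pos_le_add fun ε hε => ?_
    have htpos : 0 < min 1 (ε / (c + 1)) := lt_min one_pos (div_pos hε (by linarith))
    have ht1 : min 1 (ε / (c + 1)) ≤ 1 := min_le_left _ _
    have hs := step _ htpos ht1
    have h9 : c * min 1 (ε / (c + 1)) ≤ ε := by
      have h10 : min 1 (ε / (c + 1)) ≤ ε / (c + 1) := min_le_right _ _
      have h11 : c * min 1 (ε / (c + 1)) ≤ c * (ε / (c + 1)) :=
        mul_le_mul_of_nonneg_left h10 hc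
      have h12 : c * (ε / (c + 1)) ≤ ε := by
        rw [mul_div_assoc']
        rw [div_le_iff₀ (by linarith : (0:ℝ) < c + 1)]
        nlinarith
      linarith
    have : ⟪ξ, y - z⟫ + η / 2 * (1 - min 1 (ε / (c + 1))) * ‖y - z‖ ^ 2 ≤ u y - u z := hs
    have hexp : η / 2 * (1 - min 1 (ε / (c + 1))) * ‖y - z‖ ^ 2
        = c - c * min 1 (ε / (c + 1)) := by rw [hcdef]; ring
    linarith [hexp ▸ this]
  linarith

/-- Minimal `η`-strongly convex extension from a compact set: the supremum
`ũ(x) = sup {u(z) + ⟨ξ_z, x - z⟩ + (η/2)|x - z|² : z ∈ K, ξ_z ∈ ∂u(z)}` is finite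
everywhere (there is a real-valued function `ũ` which is the least upper bound at each
point), `η`-strongly convex on `ℝⁿ`, agrees with `u` on `K`, and is `≤ u` on `U`. -/
theorem minimal_strongly_convex_extension {n : ℕ}
    (U : Set (EuclideanSpace ℝ (Fin n))) (hUopen : IsOpen U) (hUconv : Convex ℝ U)
    (η : ℝ) (hη : 0 < η) (u : EuclideanSpace ℝ (Fin n) → ℝ)
    (hu : ConvexOn ℝ U (fun x => u x - η / 2 * ‖x‖ ^ 2))
    (K : Set (EuclideanSpace ℝ (Fin n))) (hK : IsCompact K) (hKU : K ⊆ U)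
    (hKne : K.Nonempty) :
    ∃ v : EuclideanSpace ℝ (Fin n) → ℝ,
      (∀ x, IsLUB {t : ℝ | ∃ z ∈ K, ∃ ξ ∈ subdiff U u z,
        t = u z + ⟪ξ, x - z⟫ + η / 2 * ‖x - z‖ ^ 2} (v x)) ∧
      ConvexOn ℝ Set.univ (fun x => v x - η / 2 * ‖x‖ ^ 2) ∧
      (∀ x ∈ K, v x = u x) ∧
      (∀ x ∈ U, v x ≤ u x) := by
  classical
  set S : EuclideanSpace ℝ (Fin n) → Set ℝ := fun x => {t : ℝ | ∃ z ∈ K, ∃ ξ ∈ subdiff U u z,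
    t = u z + ⟪ξ, x - z⟫ + η / 2 * ‖x - z‖ ^ 2} with hS
  -- subdifferential nonempty at every point of U
  have hsub_ne : ∀ z ∈ U, ∃ ξ, ξ ∈ subdiff U u z := by
    intro z hz
    obtain ⟨ζ, hζ⟩ := exists_subgrad_w hUopen hUconv hu hz
    refine ⟨ζ + η • z, fun y hy => ?_⟩
    have h1 := hζ y hy
    have h2 : ⟪ζ + η • z, y - z⟫ = ⟪ζ, y - z⟫ + η * ⟪z, y - z⟫ := by
      rw [inner_add_left, real_inner_smul_left]
    have h4 : ⟪z, y - z⟫ = ⟪y, z⟫ - ‖z‖ ^ 2 := by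
      rw [inner_sub_right, real_inner_comm, real_inner_self_eq_norm_sq]
    have h3 : ‖y - z‖ ^ 2 = ‖y‖ ^ 2 - 2 * ⟪y, z⟫ + ‖z‖ ^ 2 := norm_sub_sq_real y z
    have h6 : 0 ≤ η / 2 * (‖y‖ ^ 2 - 2 * ⟪y, z⟫ + ‖z‖ ^ 2) := by
      rw [← h3]; positivity
    rw [h2, h4]
    linarith
  -- continuity of u on U
  have hucont : ContinuousOn u U := by
    have h1 : ContinuousOn (fun x => u x - η / 2 * ‖x‖ ^ 2) U := hu.continuousOn hUopen
    have h2 : ContinuousOn (fun x : EuclideanSpace ℝ (Fin n) => η / 2 * ‖x‖ ^ 2) U := by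
      fun_prop
    have := h1.add h2
    refine this.congr fun x _ => ?_
    simp
  -- a compact thickening of K inside U
  obtain ⟨ε, hεpos, hεsub⟩ := hK.exists_cthickening_subset_open hUopen hKU
  have hKθ : IsCompact (cthickening ε K) := hK.cthickening
  have hKθne : (cthickening ε K).Nonempty := hKne.mono (self_subset_cthickening K)
  obtain ⟨xM, hxM, hxMmax⟩ := hKθ.exists_isMaxOn hKθne (hucont.mono hεsub)
  obtain ⟨xm, hxm, hxmmin⟩ := hK.exists_isMinOn hKne (hucont.mono hKU)
  set M := u xM with hM
  set m := u xm with hm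
  -- uniform bound on subgradients over K
  set R : ℝ := max 0 ((M - m) / ε) with hR
  have hR0 : 0 ≤ R := le_max_left _ _
  have hRbound : ∀ z ∈ K, ∀ ξ ∈ subdiff U u z, ‖ξ‖ ≤ R := by
    intro z hz ξ hξ
    rcases eq_or_ne ξ 0 with rfl | h0
    · simpa using hR0
    · have hn : 0 < ‖ξ‖ := norm_pos_iff.2 h0
      set y := z + (ε / ‖ξ‖) • ξ with hy
      have hyd : dist y z ≤ ε := by
        rw [dist_eq_norm, hy]
        have : z + (ε / ‖ξ‖) • ξ - z = (ε / ‖ξ‖) • ξ := by abel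
        rw [this, norm_smul, Real.norm_eq_abs, abs_of_nonneg (div_nonneg hεpos.le hn.le)]
        rw [div_mul_cancel₀ _ hn.ne']
      have hyθ : y ∈ cthickening ε K := mem_cthickening_of_dist_le y z ε K hz hyd
      have h1 := hξ y (hεsub hyθ)
      have h2 : ⟪ξ, y - z⟫ = ε * ‖ξ‖ := by
        rw [hy]
        have : z + (ε / ‖ξ‖) • ξ - z = (ε / ‖ξ‖) • ξ := by abel
        rw [this, real_inner_smul_right, real_inner_self_eq_norm_sq]
        field_simp
      have h3 : u y ≤ M := hxMmax hyθ
      have h4 : m ≤ u z := hxmmin hz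
      have h5 : ε * ‖ξ‖ ≤ M - m := by rw [h2] at h1; linarith
      have : ‖ξ‖ ≤ (M - m) / ε := by rw [le_div_iff₀ hεpos]; linarith
      exact this.trans (le_max_right _ _)
  -- bound on the norms of points of K
  obtain ⟨C, hC⟩ := hK.isBounded.subset_closedBall 0
  have hCnn : ∀ z ∈ K, ‖z‖ ≤ C := fun z hz => mem_closedBall_zero_iff.1 (hC hz)
  have hC0 : 0 ≤ C := le_trans (norm_nonneg _) (hCnn _ hKne.choose_spec)
  have hMz : ∀ z ∈ K, u z ≤ M := fun z hz => hxMmax (self_subset_cthickening K hz)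
  -- S x is nonempty and bounded above
  have hSne : ∀ x, (S x).Nonempty := by
    intro x
    obtain ⟨z₀, hz₀⟩ := hKne
    obtain ⟨ξ₀, hξ₀⟩ := hsub_ne z₀ (hKU hz₀)
    exact ⟨_, z₀, hz₀, ξ₀, hξ₀, rfl⟩
  have hSbdd : ∀ x, BddAbove (S x) := by
    intro x
    refine ⟨M + R * (‖x‖ + C) + η / 2 * (‖x‖ + C) ^ 2, ?_⟩
    rintro t ⟨z, hz, ξ, hξ, rfl⟩
    have hzC := hCnn z hz
    have hxz : ‖x - z‖ ≤ ‖x‖ + C := (norm_sub_le x z).trans (by linarith)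
    have hip : ⟪ξ, x - z⟫ ≤ ‖ξ‖ * ‖x - z‖ := real_inner_le_norm _ _
    have hRz := hRbound z hz ξ hξ
    have huz := hMz z hz
    have hprod : ‖ξ‖ * ‖x - z‖ ≤ R * (‖x‖ + C) :=
      mul_le_mul hRz hxz (norm_nonneg _) hR0
    have hsq : ‖x - z‖ ^ 2 ≤ (‖x‖ + C) ^ 2 := by nlinarith [norm_nonneg (x - z)]
    nlinarith [hη.le]
  -- define v
  refine ⟨fun x => sSup (S x), fun x => isLUB_csSup (hSne x) (hSbdd x), ?_, ?_, ?_⟩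
  · -- strong convexity
    have hlub : ∀ x, IsLUB (S x) (sSup (S x)) := fun x => isLUB_csSup (hSne x) (hSbdd x)
    refine ⟨convex_univ, ?_⟩
    intro x _ y _ a b ha hb hab
    obtain rfl : b = 1 - a := by linarith
    simp only [smul_eq_mul]
    have hkey : sSup (S (a • x + (1 - a) • y)) ≤
        (a * (sSup (S x) - η / 2 * ‖x‖ ^ 2) + (1 - a) * (sSup (S y) - η / 2 * ‖y‖ ^ 2))
          + η / 2 * ‖a • x + (1 - a) • y‖ ^ 2 := by
      refine (hlub _).2 ?_
      rintro t ⟨z, hz, ξ, hξ, rfl⟩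
      have hA : ∀ p : EuclideanSpace ℝ (Fin n),
          u z + ⟪ξ, p - z⟫ + η / 2 * ‖p - z‖ ^ 2 - η / 2 * ‖p‖ ^ 2
            = u z - ⟪ξ, z⟫ + η / 2 * ‖z‖ ^ 2 + (⟪ξ, p⟫ - η * ⟪p, z⟫) := by
        intro p
        rw [inner_sub_right, norm_sub_sq_real]
        ring
      have hx2 : u z - ⟪ξ, z⟫ + η / 2 * ‖z‖ ^ 2 + (⟪ξ, x⟫ - η * ⟪x, z⟫)
          ≤ sSup (S x) - η / 2 * ‖x‖ ^ 2 := by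
        have h1 : u z + ⟪ξ, x - z⟫ + η / 2 * ‖x - z‖ ^ 2 ≤ sSup (S x) :=
          (hlub x).1 ⟨z, hz, ξ, hξ, rfl⟩
        linarith [hA x]
      have hy2 : u z - ⟪ξ, z⟫ + η / 2 * ‖z‖ ^ 2 + (⟪ξ, y⟫ - η * ⟪y, z⟫)
          ≤ sSup (S y) - η / 2 * ‖y‖ ^ 2 := by
        have h1 : u z + ⟪ξ, y - z⟫ + η / 2 * ‖y - z‖ ^ 2 ≤ sSup (S y) :=
          (hlub y).1 ⟨z, hz, ξ, hξ, rfl⟩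
        linarith [hA y]
      have hc1 : ⟪ξ, a • x + (1 - a) • y⟫ = a * ⟪ξ, x⟫ + (1 - a) * ⟪ξ, y⟫ := by
        rw [inner_add_right, real_inner_smul_right, real_inner_smul_right]
      have hc2 : ⟪a • x + (1 - a) • y, z⟫ = a * ⟪x, z⟫ + (1 - a) * ⟪y, z⟫ := by
        rw [inner_add_left, real_inner_smul_left, real_inner_smul_left]
      have hAc := hA (a • x + (1 - a) • y)
      rw [hc1, hc2] at hAc
      nlinarith [mul_le_mul_of_nonneg_left hx2 ha,
        mul_le_mul_of_nonneg_left hy2 (by linarith : (0:ℝ) ≤ 1 - a)]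
    linarith
  · -- agreement on K
    intro x hx
    refine le_antisymm ?_ ?_
    · refine (isLUB_csSup (hSne x) (hSbdd x)).2 ?_
      rintro t ⟨z, hz, ξ, hξ, rfl⟩
      exact strong_subgrad hUconv hη hu (hKU hz) hξ (hKU hx)
    · obtain ⟨ξ, hξ⟩ := hsub_ne x (hKU hx)
      refine (isLUB_csSup (hSne x) (hSbdd x)).1 ⟨x, hx, ξ, hξ, ?_⟩
      simp
  · -- bounded by u on U
    intro x hx
    refine (isLUB_csSup (hSne x) (hSbdd x)).2 ?_
    rintro t ⟨z, hz, ξ, hξ, rfl⟩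
    exact strong_subgrad hUconv hη hu (hKU hz) hξ hx
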